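/- For every even n, the number of rises of the Peano word X_n equals the number of descents of X_n. -/

import Mathlib

/-- φ1: reverse the word and apply 1↦4, 2↦1, 3↦2, 4↦3. -/
def phi1 (A : List ℕ) : List ℕ := A.reverse.map (fun x => if x = 1 then 4 else x - 1)

/-- φ2: reverse the word and apply 1↦2, 2↦3, 3↦4, 4↦1. -/
def phi2 (A : List ℕ) : List ℕ := A.reverse.map (fun x => if x = 4 then 1 else x + 1)

/-- The Peano words: `peano 1 = 123`, `peano (n+1) = φ1(Xₙ) 1 Xₙ 2 Xₙ 3 φ2(Xₙ)`. -/
def peano : ℕ → List ℕ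
  | 0 => []
  | 1 => [1, 2, 3]
  | n + 2 =>
      phi1 (peano (n + 1)) ++ [1] ++ peano (n + 1) ++ [2] ++ peano (n + 1)
        ++ [3] ++ phi2 (peano (n + 1))

/-- Number of rises of a word. -/
def rises (w : List ℕ) : ℕ := ((w.zip w.tail).filter (fun p => p.1 < p.2)).length

/-- Number of descents of a word. -/
def descents (w : List ℕ) : ℕ := ((w.zip w.tail).filter (fun p => p.2 < p.1)).length

def pairs (w : List ℕ) : List (ℕ × ℕ) := w.zip w.tail

def cnt (a b : ℕ) (w : List ℕ) : ℕ :=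
  ((pairs w).filter (fun p => p.1 = a ∧ p.2 = b)).length

def Good (hd lst e : ℕ) (w : List ℕ) : Prop :=
  (∀ x ∈ w, x = 1 ∨ x = 2 ∨ x = 3 ∨ x = 4) ∧
  w.head? = some hd ∧ w.getLast? = some lst ∧
  cnt 1 2 w = cnt 2 1 w + e ∧
  cnt 2 3 w = cnt 3 2 w + e ∧
  cnt 3 4 w = cnt 4 3 w ∧
  cnt 1 4 w = cnt 4 1 w ∧
  cnt 1 3 w = cnt 3 1 w ∧
  cnt 2 4 w = cnt 4 2 w

lemma pairs_cons_cons (a b : ℕ) (t : List ℕ) :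
    pairs (a :: b :: t) = (a, b) :: pairs (b :: t) := rfl

lemma pairs_append (u v : List ℕ) (x y : ℕ)
    (hu : u.getLast? = some x) (hv : v.head? = some y) :
    pairs (u ++ v) = pairs u ++ (x, y) :: pairs v := by
  induction u with
  | nil => simp at hu
  | cons a t ih =>
    cases t with
    | nil =>
      simp at hu
      subst hu
      cases v with
      | nil => simp at hv
      | cons c s =>
        simp at hv
        subst hv
        simp [pairs]
    | cons b t' =>
      have hu' : (b :: t').getLast? = some x := by
        rwa [List.getLast?_cons_cons] at hu
      have := ih hu'
      simp only [List.cons_append] at *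
      rw [pairs_cons_cons, pairs_cons_cons]
      rw [this]
      simp

lemma pairs_map (f : ℕ → ℕ) (w : List ℕ) :
    pairs (w.map f) = (pairs w).map (Prod.map f f) := by
  unfold pairs
  rw [show (w.map f).tail = w.tail.map f by cases w <;> simp, List.zip_map]

lemma pairs_reverse (w : List ℕ) :
    pairs w.reverse = ((pairs w).map Prod.swap).reverse := by
  induction w with
  | nil => simp [pairs]
  | cons a t ih =>
    cases t with
    | nil => simp [pairs]
    | cons h t' =>
      have hu : (h :: t').reverse.getLast? = some h := by
        rw [List.getLast?_reverse]; rfl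
      rw [show (a :: h :: t').reverse = (h :: t').reverse ++ [a] by simp]
      rw [pairs_append _ _ h a hu (by rfl), ih, pairs_cons_cons]
      simp [pairs]


lemma cnt_append (a b : ℕ) (u v : List ℕ) (x y : ℕ)
    (hu : u.getLast? = some x) (hv : v.head? = some y) :
    cnt a b (u ++ v) = cnt a b u + cnt a b v + (if x = a ∧ y = b then 1 else 0) := by
  unfold cnt
  rw [pairs_append u v x y hu hv, List.filter_append, List.filter_cons]
  by_cases h : x = a ∧ y = b
  · simp [h]; omega
  · simp [h]

lemma mem_pairs_left {p : ℕ × ℕ} {w : List ℕ} (h : p ∈ pairs w) : p.1 ∈ w := by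
  obtain ⟨x, y⟩ := p
  exact (List.of_mem_zip h).1

lemma mem_pairs_right {p : ℕ × ℕ} {w : List ℕ} (h : p ∈ pairs w) : p.2 ∈ w := by
  obtain ⟨x, y⟩ := p
  exact List.mem_of_mem_tail (List.of_mem_zip h).2

lemma cnt_rev_map (g : ℕ → ℕ) (w : List ℕ) (a b a' b' : ℕ)
    (ha : ∀ x ∈ w, (g x = a ↔ x = a')) (hb : ∀ x ∈ w, (g x = b ↔ x = b')) :
    cnt a b (w.reverse.map g) = cnt b' a' w := by
  unfold cnt
  rw [pairs_map, pairs_reverse, ← List.map_reverse, List.map_map, List.filter_map,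
    List.length_map, List.filter_reverse, List.length_reverse]
  rw [List.filter_congr (q := fun p => decide (p.1 = b' ∧ p.2 = a')) ?_]
  intro p hp
  have m1 : p.1 ∈ w := mem_pairs_left hp
  have m2 : p.2 ∈ w := mem_pairs_right hp
  simp only [Function.comp, Prod.map, Prod.swap, decide_eq_decide]
  rw [ha p.2 m2, hb p.1 m1, and_comm]


lemma rises_sum_helper (l : List (ℕ × ℕ))
    (h : ∀ p ∈ l, (p.1 = 1 ∨ p.1 = 2 ∨ p.1 = 3 ∨ p.1 = 4) ∧
      (p.2 = 1 ∨ p.2 = 2 ∨ p.2 = 3 ∨ p.2 = 4)) :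
    (l.filter (fun p => p.1 < p.2)).length =
      (l.filter (fun p => p.1 = 1 ∧ p.2 = 2)).length +
      (l.filter (fun p => p.1 = 1 ∧ p.2 = 3)).length +
      (l.filter (fun p => p.1 = 1 ∧ p.2 = 4)).length +
      (l.filter (fun p => p.1 = 2 ∧ p.2 = 3)).length +
      (l.filter (fun p => p.1 = 2 ∧ p.2 = 4)).length +
      (l.filter (fun p => p.1 = 3 ∧ p.2 = 4)).length := by
  induction l with
  | nil => simp
  | cons p t ih =>
    obtain ⟨x, y⟩ := p
    have h1 := (h (x, y) List.mem_cons_self).1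
    have h2 := (h (x, y) List.mem_cons_self).2
    have ih' := ih (fun q hq => h q (List.mem_cons_of_mem _ hq))
    simp only at h1 h2
    rcases h1 with rfl | rfl | rfl | rfl <;> rcases h2 with rfl | rfl | rfl | rfl <;>
      simp [List.filter_cons, Bool.decide_and] at ih' ⊢ <;> omega

lemma descents_sum_helper (l : List (ℕ × ℕ))
    (h : ∀ p ∈ l, (p.1 = 1 ∨ p.1 = 2 ∨ p.1 = 3 ∨ p.1 = 4) ∧
      (p.2 = 1 ∨ p.2 = 2 ∨ p.2 = 3 ∨ p.2 = 4)) :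
    (l.filter (fun p => p.2 < p.1)).length =
      (l.filter (fun p => p.1 = 2 ∧ p.2 = 1)).length +
      (l.filter (fun p => p.1 = 3 ∧ p.2 = 1)).length +
      (l.filter (fun p => p.1 = 4 ∧ p.2 = 1)).length +
      (l.filter (fun p => p.1 = 3 ∧ p.2 = 2)).length +
      (l.filter (fun p => p.1 = 4 ∧ p.2 = 2)).length +
      (l.filter (fun p => p.1 = 4 ∧ p.2 = 3)).length := by
  induction l with
  | nil => simp
  | cons p t ih =>
    obtain ⟨x, y⟩ := p
    have h1 := (h (x, y) List.mem_cons_self).1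
    have h2 := (h (x, y) List.mem_cons_self).2
    have ih' := ih (fun q hq => h q (List.mem_cons_of_mem _ hq))
    simp only at h1 h2
    rcases h1 with rfl | rfl | rfl | rfl <;> rcases h2 with rfl | rfl | rfl | rfl <;>
      simp [List.filter_cons, Bool.decide_and] at ih' ⊢ <;> omega

lemma rises_eq_sum (w : List ℕ) (hmem : ∀ x ∈ w, x = 1 ∨ x = 2 ∨ x = 3 ∨ x = 4) :
    rises w = cnt 1 2 w + cnt 1 3 w + cnt 1 4 w + cnt 2 3 w + cnt 2 4 w + cnt 3 4 w := by
  exact rises_sum_helper (pairs w)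
    (fun p hp => ⟨hmem _ (mem_pairs_left hp), hmem _ (mem_pairs_right hp)⟩)

lemma descents_eq_sum (w : List ℕ) (hmem : ∀ x ∈ w, x = 1 ∨ x = 2 ∨ x = 3 ∨ x = 4) :
    descents w = cnt 2 1 w + cnt 3 1 w + cnt 4 1 w + cnt 3 2 w + cnt 4 2 w + cnt 4 3 w := by
  exact descents_sum_helper (pairs w)
    (fun p hp => ⟨hmem _ (mem_pairs_left hp), hmem _ (mem_pairs_right hp)⟩)


lemma phi1_head? (Y : List ℕ) (lst : ℕ) (h : Y.getLast? = some lst) :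
    (phi1 Y).head? = some (if lst = 1 then 4 else lst - 1) := by
  unfold phi1
  rw [List.head?_map, List.head?_reverse, h]
  rfl

lemma phi1_getLast? (Y : List ℕ) (hd : ℕ) (h : Y.head? = some hd) :
    (phi1 Y).getLast? = some (if hd = 1 then 4 else hd - 1) := by
  unfold phi1
  rw [List.getLast?_map, List.getLast?_reverse, h]
  rfl

lemma phi2_head? (Y : List ℕ) (lst : ℕ) (h : Y.getLast? = some lst) :
    (phi2 Y).head? = some (if lst = 4 then 1 else lst + 1) := by
  unfold phi2
  rw [List.head?_map, List.head?_reverse, h]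
  rfl

lemma phi2_getLast? (Y : List ℕ) (hd : ℕ) (h : Y.head? = some hd) :
    (phi2 Y).getLast? = some (if hd = 4 then 1 else hd + 1) := by
  unfold phi2
  rw [List.getLast?_map, List.getLast?_reverse, h]
  rfl

lemma cnt_phi1 (Y : List ℕ) (hmem : ∀ x ∈ Y, x = 1 ∨ x = 2 ∨ x = 3 ∨ x = 4)
    (a b a' b' : ℕ)
    (ka : (a = 1 ∧ a' = 2) ∨ (a = 2 ∧ a' = 3) ∨ (a = 3 ∧ a' = 4) ∨ (a = 4 ∧ a' = 1))
    (kb : (b = 1 ∧ b' = 2) ∨ (b = 2 ∧ b' = 3) ∨ (b = 3 ∧ b' = 4) ∨ (b = 4 ∧ b' = 1)) :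
    cnt a b (phi1 Y) = cnt b' a' Y := by
  apply cnt_rev_map <;> intro x hx <;>
    rcases hmem x hx with rfl | rfl | rfl | rfl
  · rcases ka with ⟨rfl, rfl⟩ | ⟨rfl, rfl⟩ | ⟨rfl, rfl⟩ | ⟨rfl, rfl⟩ <;> norm_num
  · rcases ka with ⟨rfl, rfl⟩ | ⟨rfl, rfl⟩ | ⟨rfl, rfl⟩ | ⟨rfl, rfl⟩ <;> norm_num
  · rcases ka with ⟨rfl, rfl⟩ | ⟨rfl, rfl⟩ | ⟨rfl, rfl⟩ | ⟨rfl, rfl⟩ <;> norm_num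
  · rcases ka with ⟨rfl, rfl⟩ | ⟨rfl, rfl⟩ | ⟨rfl, rfl⟩ | ⟨rfl, rfl⟩ <;> norm_num
  · rcases kb with ⟨rfl, rfl⟩ | ⟨rfl, rfl⟩ | ⟨rfl, rfl⟩ | ⟨rfl, rfl⟩ <;> norm_num
  · rcases kb with ⟨rfl, rfl⟩ | ⟨rfl, rfl⟩ | ⟨rfl, rfl⟩ | ⟨rfl, rfl⟩ <;> norm_num
  · rcases kb with ⟨rfl, rfl⟩ | ⟨rfl, rfl⟩ | ⟨rfl, rfl⟩ | ⟨rfl, rfl⟩ <;> norm_num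
  · rcases kb with ⟨rfl, rfl⟩ | ⟨rfl, rfl⟩ | ⟨rfl, rfl⟩ | ⟨rfl, rfl⟩ <;> norm_num

lemma cnt_phi2 (Y : List ℕ) (hmem : ∀ x ∈ Y, x = 1 ∨ x = 2 ∨ x = 3 ∨ x = 4)
    (a b a' b' : ℕ)
    (ka : (a = 1 ∧ a' = 4) ∨ (a = 2 ∧ a' = 1) ∨ (a = 3 ∧ a' = 2) ∨ (a = 4 ∧ a' = 3))
    (kb : (b = 1 ∧ b' = 4) ∨ (b = 2 ∧ b' = 1) ∨ (b = 3 ∧ b' = 2) ∨ (b = 4 ∧ b' = 3)) :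
    cnt a b (phi2 Y) = cnt b' a' Y := by
  apply cnt_rev_map <;> intro x hx <;>
    rcases hmem x hx with rfl | rfl | rfl | rfl
  · rcases ka with ⟨rfl, rfl⟩ | ⟨rfl, rfl⟩ | ⟨rfl, rfl⟩ | ⟨rfl, rfl⟩ <;> norm_num
  · rcases ka with ⟨rfl, rfl⟩ | ⟨rfl, rfl⟩ | ⟨rfl, rfl⟩ | ⟨rfl, rfl⟩ <;> norm_num
  · rcases ka with ⟨rfl, rfl⟩ | ⟨rfl, rfl⟩ | ⟨rfl, rfl⟩ | ⟨rfl, rfl⟩ <;> norm_num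
  · rcases ka with ⟨rfl, rfl⟩ | ⟨rfl, rfl⟩ | ⟨rfl, rfl⟩ | ⟨rfl, rfl⟩ <;> norm_num
  · rcases kb with ⟨rfl, rfl⟩ | ⟨rfl, rfl⟩ | ⟨rfl, rfl⟩ | ⟨rfl, rfl⟩ <;> norm_num
  · rcases kb with ⟨rfl, rfl⟩ | ⟨rfl, rfl⟩ | ⟨rfl, rfl⟩ | ⟨rfl, rfl⟩ <;> norm_num
  · rcases kb with ⟨rfl, rfl⟩ | ⟨rfl, rfl⟩ | ⟨rfl, rfl⟩ | ⟨rfl, rfl⟩ <;> norm_num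
  · rcases kb with ⟨rfl, rfl⟩ | ⟨rfl, rfl⟩ | ⟨rfl, rfl⟩ | ⟨rfl, rfl⟩ <;> norm_num

lemma head?_append_left {l : List ℕ} (l' : List ℕ) (h : l ≠ []) :
    (l ++ l').head? = l.head? := by
  cases l with
  | nil => simp at h
  | cons a t => simp

lemma getLast?_append_right {l l' : List ℕ} (h : l' ≠ []) :
    (l ++ l').getLast? = l'.getLast? := by
  rw [List.getLast?_append]
  cases l' with
  | nil => simp at h
  | cons a t =>
    have : (a :: t).getLast? = some ((a :: t).getLast (by simp)) := List.getLast?_eq_getLast _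
    rw [this]; rfl


lemma cnt_singleton (a b c : ℕ) : cnt a b [c] = 0 := rfl

lemma cnt_big (Y : List ℕ) (hd lst : ℕ)
    (hhd : Y.head? = some hd) (hlst : Y.getLast? = some lst) (a b : ℕ) :
    cnt a b (phi1 Y ++ [1] ++ Y ++ [2] ++ Y ++ [3] ++ phi2 Y) =
      cnt a b (phi1 Y) + cnt a b Y + cnt a b Y + cnt a b (phi2 Y)
      + (if (if hd = 1 then 4 else hd - 1) = a ∧ 1 = b then 1 else 0)
      + (if 1 = a ∧ hd = b then 1 else 0)
      + (if lst = a ∧ 2 = b then 1 else 0)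
      + (if 2 = a ∧ hd = b then 1 else 0)
      + (if lst = a ∧ 3 = b then 1 else 0)
      + (if 3 = a ∧ (if lst = 4 then 1 else lst + 1) = b then 1 else 0) := by
  have hYne : Y ≠ [] := by intro h; rw [h] at hhd; simp at hhd
  rw [cnt_append a b _ (phi2 Y) 3 (if lst = 4 then 1 else lst + 1)
      ((getLast?_append_right (l' := [3]) (by simp)).trans rfl) (phi2_head? Y lst hlst)]
  rw [cnt_append a b _ [3] lst 3
      ((getLast?_append_right hYne).trans hlst) rfl]
  rw [cnt_append a b _ Y 2 hd ((getLast?_append_right (l' := [2]) (by simp)).trans rfl) hhd]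
  rw [cnt_append a b _ [2] lst 2 ((getLast?_append_right hYne).trans hlst) rfl]
  rw [cnt_append a b _ Y 1 hd ((getLast?_append_right (l' := [1]) (by simp)).trans rfl) hhd]
  rw [cnt_append a b (phi1 Y) [1] (if hd = 1 then 4 else hd - 1) 1
      (phi1_getLast? Y hd hhd) rfl]
  rw [cnt_singleton, cnt_singleton, cnt_singleton]
  omega


lemma mem_phi1 (Y : List ℕ) (hmem : ∀ x ∈ Y, x = 1 ∨ x = 2 ∨ x = 3 ∨ x = 4) :
    ∀ x ∈ phi1 Y, x = 1 ∨ x = 2 ∨ x = 3 ∨ x = 4 := by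
  intro x hx
  simp only [phi1, List.mem_map, List.mem_reverse] at hx
  obtain ⟨y, hy, rfl⟩ := hx
  rcases hmem y hy with rfl | rfl | rfl | rfl <;> norm_num

lemma mem_phi2 (Y : List ℕ) (hmem : ∀ x ∈ Y, x = 1 ∨ x = 2 ∨ x = 3 ∨ x = 4) :
    ∀ x ∈ phi2 Y, x = 1 ∨ x = 2 ∨ x = 3 ∨ x = 4 := by
  intro x hx
  simp only [phi2, List.mem_map, List.mem_reverse] at hx
  obtain ⟨y, hy, rfl⟩ := hx
  rcases hmem y hy with rfl | rfl | rfl | rfl <;> norm_num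

lemma mem_big (Y : List ℕ) (hmem : ∀ x ∈ Y, x = 1 ∨ x = 2 ∨ x = 3 ∨ x = 4) :
    ∀ x ∈ phi1 Y ++ [1] ++ Y ++ [2] ++ Y ++ [3] ++ phi2 Y,
      x = 1 ∨ x = 2 ∨ x = 3 ∨ x = 4 := by
  intro x hx
  simp only [List.mem_append, List.mem_singleton, or_assoc] at hx
  rcases hx with hx | rfl | hx | rfl | hx | rfl | hx
  · exact mem_phi1 Y hmem x hx
  · norm_num
  · exact hmem x hx
  · norm_num
  · exact hmem x hx
  · norm_num
  · exact mem_phi2 Y hmem x hx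

lemma good_step_odd (Y : List ℕ) (h : Good 1 3 1 Y) :
    Good 2 2 0 (phi1 Y ++ [1] ++ Y ++ [2] ++ Y ++ [3] ++ phi2 Y) := by
  obtain ⟨hmem, hhd, hlst, e12, e23, e34, e14, e13, e24⟩ := h
  have hYne : Y ≠ [] := by intro h; rw [h] at hhd; simp at hhd
  have hphi1ne : phi1 Y ≠ [] := by simp [phi1, hYne]
  have hphi2ne : phi2 Y ≠ [] := by simp [phi2, hYne]
  refine ⟨mem_big Y hmem, ?_, ?_, ?_, ?_, ?_, ?_, ?_, ?_⟩
  · rw [head?_append_left _ (by simp [hphi1ne]),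
      head?_append_left _ (by simp [hphi1ne]),
      head?_append_left _ (by simp [hphi1ne]),
      head?_append_left _ (by simp [hphi1ne]),
      head?_append_left _ (by simp [hphi1ne]),
      head?_append_left _ hphi1ne,
      phi1_head? Y 3 hlst]
    norm_num
  · rw [getLast?_append_right hphi2ne, phi2_getLast? Y 1 hhd]
    norm_num
  · rw [cnt_big Y 1 3 hhd hlst 1 2, cnt_big Y 1 3 hhd hlst 2 1,
      cnt_phi1 Y hmem 1 2 2 3 (by norm_num) (by norm_num),
      cnt_phi1 Y hmem 2 1 3 2 (by norm_num) (by norm_num),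
      cnt_phi2 Y hmem 1 2 4 1 (by norm_num) (by norm_num),
      cnt_phi2 Y hmem 2 1 1 4 (by norm_num) (by norm_num)]
    norm_num
    omega
  · rw [cnt_big Y 1 3 hhd hlst 2 3, cnt_big Y 1 3 hhd hlst 3 2,
      cnt_phi1 Y hmem 2 3 3 4 (by norm_num) (by norm_num),
      cnt_phi1 Y hmem 3 2 4 3 (by norm_num) (by norm_num),
      cnt_phi2 Y hmem 2 3 1 2 (by norm_num) (by norm_num),
      cnt_phi2 Y hmem 3 2 2 1 (by norm_num) (by norm_num)]
    norm_num
    omega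
  · rw [cnt_big Y 1 3 hhd hlst 3 4, cnt_big Y 1 3 hhd hlst 4 3,
      cnt_phi1 Y hmem 3 4 4 1 (by norm_num) (by norm_num),
      cnt_phi1 Y hmem 4 3 1 4 (by norm_num) (by norm_num),
      cnt_phi2 Y hmem 3 4 2 3 (by norm_num) (by norm_num),
      cnt_phi2 Y hmem 4 3 3 2 (by norm_num) (by norm_num)]
    norm_num
    omega
  · rw [cnt_big Y 1 3 hhd hlst 1 4, cnt_big Y 1 3 hhd hlst 4 1,
      cnt_phi1 Y hmem 1 4 2 1 (by norm_num) (by norm_num),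
      cnt_phi1 Y hmem 4 1 1 2 (by norm_num) (by norm_num),
      cnt_phi2 Y hmem 1 4 4 3 (by norm_num) (by norm_num),
      cnt_phi2 Y hmem 4 1 3 4 (by norm_num) (by norm_num)]
    norm_num
    omega
  · rw [cnt_big Y 1 3 hhd hlst 1 3, cnt_big Y 1 3 hhd hlst 3 1,
      cnt_phi1 Y hmem 1 3 2 4 (by norm_num) (by norm_num),
      cnt_phi1 Y hmem 3 1 4 2 (by norm_num) (by norm_num),
      cnt_phi2 Y hmem 1 3 4 2 (by norm_num) (by norm_num),
      cnt_phi2 Y hmem 3 1 2 4 (by norm_num) (by norm_num)]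
    norm_num
    omega
  · rw [cnt_big Y 1 3 hhd hlst 2 4, cnt_big Y 1 3 hhd hlst 4 2,
      cnt_phi1 Y hmem 2 4 3 1 (by norm_num) (by norm_num),
      cnt_phi1 Y hmem 4 2 1 3 (by norm_num) (by norm_num),
      cnt_phi2 Y hmem 2 4 1 3 (by norm_num) (by norm_num),
      cnt_phi2 Y hmem 4 2 3 1 (by norm_num) (by norm_num)]
    norm_num
    omega

lemma good_step_even (Y : List ℕ) (h : Good 2 2 0 Y) :
    Good 1 3 1 (phi1 Y ++ [1] ++ Y ++ [2] ++ Y ++ [3] ++ phi2 Y) := by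
  obtain ⟨hmem, hhd, hlst, e12, e23, e34, e14, e13, e24⟩ := h
  have hYne : Y ≠ [] := by intro h; rw [h] at hhd; simp at hhd
  have hphi1ne : phi1 Y ≠ [] := by simp [phi1, hYne]
  have hphi2ne : phi2 Y ≠ [] := by simp [phi2, hYne]
  refine ⟨mem_big Y hmem, ?_, ?_, ?_, ?_, ?_, ?_, ?_, ?_⟩
  · rw [head?_append_left _ (by simp [hphi1ne]),
      head?_append_left _ (by simp [hphi1ne]),
      head?_append_left _ (by simp [hphi1ne]),
      head?_append_left _ (by simp [hphi1ne]),
      head?_append_left _ (by simp [hphi1ne]),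
      head?_append_left _ hphi1ne,
      phi1_head? Y 2 hlst]
    norm_num
  · rw [getLast?_append_right hphi2ne, phi2_getLast? Y 2 hhd]
    norm_num
  · rw [cnt_big Y 2 2 hhd hlst 1 2, cnt_big Y 2 2 hhd hlst 2 1,
      cnt_phi1 Y hmem 1 2 2 3 (by norm_num) (by norm_num),
      cnt_phi1 Y hmem 2 1 3 2 (by norm_num) (by norm_num),
      cnt_phi2 Y hmem 1 2 4 1 (by norm_num) (by norm_num),
      cnt_phi2 Y hmem 2 1 1 4 (by norm_num) (by norm_num)]
    norm_num
    omega
  · rw [cnt_big Y 2 2 hhd hlst 2 3, cnt_big Y 2 2 hhd hlst 3 2,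
      cnt_phi1 Y hmem 2 3 3 4 (by norm_num) (by norm_num),
      cnt_phi1 Y hmem 3 2 4 3 (by norm_num) (by norm_num),
      cnt_phi2 Y hmem 2 3 1 2 (by norm_num) (by norm_num),
      cnt_phi2 Y hmem 3 2 2 1 (by norm_num) (by norm_num)]
    norm_num
    omega
  · rw [cnt_big Y 2 2 hhd hlst 3 4, cnt_big Y 2 2 hhd hlst 4 3,
      cnt_phi1 Y hmem 3 4 4 1 (by norm_num) (by norm_num),
      cnt_phi1 Y hmem 4 3 1 4 (by norm_num) (by norm_num),
      cnt_phi2 Y hmem 3 4 2 3 (by norm_num) (by norm_num),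
      cnt_phi2 Y hmem 4 3 3 2 (by norm_num) (by norm_num)]
    norm_num
    omega
  · rw [cnt_big Y 2 2 hhd hlst 1 4, cnt_big Y 2 2 hhd hlst 4 1,
      cnt_phi1 Y hmem 1 4 2 1 (by norm_num) (by norm_num),
      cnt_phi1 Y hmem 4 1 1 2 (by norm_num) (by norm_num),
      cnt_phi2 Y hmem 1 4 4 3 (by norm_num) (by norm_num),
      cnt_phi2 Y hmem 4 1 3 4 (by norm_num) (by norm_num)]
    norm_num
    omega
  · rw [cnt_big Y 2 2 hhd hlst 1 3, cnt_big Y 2 2 hhd hlst 3 1,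
      cnt_phi1 Y hmem 1 3 2 4 (by norm_num) (by norm_num),
      cnt_phi1 Y hmem 3 1 4 2 (by norm_num) (by norm_num),
      cnt_phi2 Y hmem 1 3 4 2 (by norm_num) (by norm_num),
      cnt_phi2 Y hmem 3 1 2 4 (by norm_num) (by norm_num)]
    norm_num
    omega
  · rw [cnt_big Y 2 2 hhd hlst 2 4, cnt_big Y 2 2 hhd hlst 4 2,
      cnt_phi1 Y hmem 2 4 3 1 (by norm_num) (by norm_num),
      cnt_phi1 Y hmem 4 2 1 3 (by norm_num) (by norm_num),
      cnt_phi2 Y hmem 2 4 1 3 (by norm_num) (by norm_num),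
      cnt_phi2 Y hmem 4 2 3 1 (by norm_num) (by norm_num)]
    norm_num
    omega


lemma peano_succ_succ (n : ℕ) : peano (n + 2) =
    phi1 (peano (n + 1)) ++ [1] ++ peano (n + 1) ++ [2] ++ peano (n + 1)
      ++ [3] ++ phi2 (peano (n + 1)) := rfl

lemma good_base : Good 1 3 1 (peano 1) := by
  refine ⟨by decide, rfl, rfl, by decide, by decide, by decide, by decide, by decide, by decide⟩

lemma good_peano : ∀ m : ℕ, Good 1 3 1 (peano (2 * m + 1)) ∧ Good 2 2 0 (peano (2 * m + 2)) := by
  intro m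
  induction m with
  | zero =>
    refine ⟨good_base, ?_⟩
    rw [show 2 * 0 + 2 = 0 + 2 by ring, peano_succ_succ]
    exact good_step_odd _ good_base
  | succ k ih =>
    have h1 : Good 1 3 1 (peano (2 * (k + 1) + 1)) := by
      rw [show 2 * (k + 1) + 1 = (2 * k + 1) + 2 by ring, peano_succ_succ,
        show 2 * k + 1 + 1 = 2 * k + 2 by ring]
      exact good_step_even _ ih.2
    refine ⟨h1, ?_⟩
    rw [show 2 * (k + 1) + 2 = (2 * k + 2) + 2 by ring, peano_succ_succ,
      show 2 * k + 2 + 1 = 2 * (k + 1) + 1 by ring]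
    exact good_step_odd _ h1

theorem peano_rises_eq_descents_of_even (n : ℕ) (hn : Even n) :
    rises (peano n) = descents (peano n) := by
  rcases n with _ | n
  · rfl
  · obtain ⟨k, hk⟩ := hn
    have hk1 : 1 ≤ k := by omega
    have h2 : n + 1 = 2 * (k - 1) + 2 := by omega
    rw [h2]
    obtain ⟨hmem, _, _, e12, e23, e34, e14, e13, e24⟩ := (good_peano (k - 1)).2
    rw [rises_eq_sum _ hmem, descents_eq_sum _ hmem]
    omega
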